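/- Let X be an e-separable topological space and κ ≤ 2^ℵ₀ a cardinal. Then the product space X^κ is e-separable. -/

import Mathlib

open Cardinal Set

universe u

/-- A subset `D` of a topological space is closed discrete iff it is closed and
its subspace topology is discrete. -/
def ClosedDiscrete {X : Type u} [TopologicalSpace X] (D : Set X) : Prop :=
  IsClosed D ∧ DiscreteTopology D

/-- A space is `e`-separable iff it has a dense set which is a countable union of
closed discrete sets. -/
def ESeparable (X : Type u) [TopologicalSpace X] : Prop :=
  ∃ D : ℕ → Set X, (∀ n, ClosedDiscrete (D n)) ∧ Dense (⋃ n, D n)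

/-- The density of a space: the least cardinality of a dense subset. -/
noncomputable def density (X : Type u) [TopologicalSpace X] : Cardinal.{u} :=
  sInf {c | ∃ D : Set X, Dense D ∧ #D = c}

/-- The extent of a space: the supremum of the cardinalities of closed discrete subsets. -/
noncomputable def extent (X : Type u) [TopologicalSpace X] : Cardinal.{u} :=
  sSup {c | ∃ D : Set X, ClosedDiscrete D ∧ #D = c}

/-- In a discrete subspace, every point has an isolating open set. -/
lemma exists_isolating {X : Type*} [TopologicalSpace X] {D : Set X}
    (h : DiscreteTopology D) {x : X} (hx : x ∈ D) :
    ∃ U : Set X, IsOpen U ∧ x ∈ U ∧ ∀ y ∈ U, y ∈ D → y = x := by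
  have hopen : IsOpen {(⟨x, hx⟩ : D)} := isOpen_discrete _
  rw [isOpen_induced_iff] at hopen
  obtain ⟨U, hU, hpre⟩ := hopen
  refine ⟨U, hU, ?_, ?_⟩
  · have : (⟨x, hx⟩ : D) ∈ (Subtype.val ⁻¹' U : Set D) := by rw [hpre]; rfl
    exact this
  · intro y hyU hyD
    have : (⟨y, hyD⟩ : D) ∈ (Subtype.val ⁻¹' U : Set D) := hyU
    rw [hpre] at this
    exact congrArg Subtype.val this

/-- Pattern set: functions constant on the cells determined by the first `N` bits of `e`,
taking on the cell with pattern `r` a value in `D (c r)`. -/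
def patSet {X : Type u} [TopologicalSpace X] {ι : Type u} (e : ι → ℕ → Bool)
    (D : ℕ → Set X) (N : ℕ) (c : (Fin N → Bool) → ℕ) : Set (ι → X) :=
  {f | (∀ a b : ι, (fun i : Fin N => e a i) = (fun i : Fin N => e b i) → f a = f b) ∧
       ∀ a : ι, f a ∈ D (c (fun i : Fin N => e a i))}

lemma patSet_isClosed {X : Type u} [TopologicalSpace X] {ι : Type u} (e : ι → ℕ → Bool)
    (D : ℕ → Set X) (hD : ∀ n, ClosedDiscrete (D n))
    (N : ℕ) (c : (Fin N → Bool) → ℕ) :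
    IsClosed (patSet e D N c) := by
  rw [← isOpen_compl_iff, isOpen_iff_forall_mem_open]
  intro g hg
  by_cases hB : ∀ a : ι, g a ∈ D (c (fun i : Fin N => e a i))
  · have hA : ¬ ∀ a b : ι, (fun i : Fin N => e a i) = (fun i : Fin N => e b i) → g a = g b :=
      fun hA => hg ⟨hA, hB⟩
    push_neg at hA
    obtain ⟨a, b, hab, hne⟩ := hA
    set n := c (fun i : Fin N => e a i) with hn
    have hga : g a ∈ D n := hB a
    have hgb : g b ∈ D n := by have := hB b; rwa [← hab] at this
    obtain ⟨U, hUo, hUm, hUi⟩ := exists_isolating (hD n).2 hga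
    obtain ⟨V, hVo, hVm, hVi⟩ := exists_isolating (hD n).2 hgb
    refine ⟨(fun h => h a) ⁻¹' U ∩ (fun h => h b) ⁻¹' V, ?_, ?_, hUm, hVm⟩
    · rintro h ⟨h1, h2⟩ hS
      have heq : h a = h b := hS.1 a b hab
      have ha : h a ∈ D n := hS.2 a
      have hb : h b ∈ D n := by rw [← heq]; exact ha
      have e1 : h a = g a := hUi _ h1 ha
      have e2 : h b = g b := hVi _ h2 hb
      exact hne (e1 ▸ e2 ▸ heq)
    · exact (hUo.preimage (continuous_apply a)).inter (hVo.preimage (continuous_apply b))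
  · push_neg at hB
    obtain ⟨a, ha⟩ := hB
    refine ⟨(fun h => h a) ⁻¹' (D (c (fun i : Fin N => e a i)))ᶜ, ?_, ?_, ha⟩
    · intro h hh hS; exact hh (hS.2 a)
    · exact ((hD _).1.isOpen_compl).preimage (continuous_apply a)

lemma patSet_discrete {X : Type u} [TopologicalSpace X] {ι : Type u} (e : ι → ℕ → Bool)
    (D : ℕ → Set X) (hD : ∀ n, ClosedDiscrete (D n))
    (N : ℕ) (c : (Fin N → Bool) → ℕ) :
    DiscreteTopology (patSet e D N c) := by
  classical
  rw [discreteTopology_iff_isOpen_singleton]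
  rintro ⟨f, hf⟩
  have hiso : ∀ r : Fin N → Bool, ∀ h : ∃ a : ι, (fun i : Fin N => e a i) = r,
      ∃ U : Set X, IsOpen U ∧ f h.choose ∈ U ∧ ∀ y ∈ U, y ∈ D (c r) → y = f h.choose := by
    intro r h
    have hx : f h.choose ∈ D (c r) := by
      have := hf.2 h.choose
      rwa [h.choose_spec] at this
    exact exists_isolating (hD (c r)).2 hx
  choose U hUopen hUmem hUiso using hiso
  let V : (Fin N → Bool) → Set (ι → X) := fun r =>
    if h : ∃ a : ι, (fun i : Fin N => e a i) = r then {g | g h.choose ∈ U r h} else univ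
  have hVopen : ∀ r, IsOpen (V r) := by
    intro r
    by_cases h : ∃ a : ι, (fun i : Fin N => e a i) = r
    · simp only [V, dif_pos h]
      exact (hUopen r h).preimage (continuous_apply _)
    · simp only [V, dif_neg h]; exact isOpen_univ
  have key : (Subtype.val ⁻¹' ⋂ r, V r : Set (patSet e D N c)) = {⟨f, hf⟩} := by
    ext ⟨g, hg⟩
    simp only [mem_preimage, mem_iInter, mem_singleton_iff, Subtype.mk_eq_mk]
    constructor
    · intro hgV
      funext a
      have h : ∃ a' : ι, (fun i : Fin N => e a' i) = (fun i : Fin N => e a i) := ⟨a, rfl⟩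
      have h1 := hgV (fun i : Fin N => e a i)
      simp only [V, dif_pos h, mem_setOf_eq] at h1
      have h2 : g h.choose ∈ D (c (fun i : Fin N => e a i)) := by
        have := hg.2 h.choose; rwa [h.choose_spec] at this
      have h3 : g h.choose = f h.choose := hUiso _ h _ h1 h2
      have h4 : g a = g h.choose := hg.1 a h.choose h.choose_spec.symm
      have h5 : f a = f h.choose := hf.1 a h.choose h.choose_spec.symm
      rw [h4, h5, h3]
    · rintro rfl
      intro r
      by_cases h : ∃ a' : ι, (fun i : Fin N => e a' i) = r
      · simp only [V, dif_pos h, mem_setOf_eq]; exact hUmem r h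
      · simp only [V, dif_neg h]; exact mem_univ _
  rw [← key]
  exact (isOpen_iInter_of_finite hVopen).preimage continuous_subtype_val

lemma patSet_dense {X : Type u} [TopologicalSpace X] {ι : Type u} {e : ι → ℕ → Bool}
    (he : Function.Injective e) (D : ℕ → Set X)
    (hdense : Dense (⋃ n, D n)) (n₀ : ℕ) (d₀ : X) (hd₀ : d₀ ∈ D n₀) :
    Dense (⋃ p : (N : ℕ) × ((Fin N → Bool) → ℕ), patSet e D p.1 p.2) := by
  classical
  rw [dense_iff_inter_open]
  rintro O hO ⟨x, hx⟩
  obtain ⟨I, u, hu, hOsub⟩ := isOpen_pi_iff.mp hO x hx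
  set g2 : ι × ι → ℕ := fun q =>
    if h : e q.1 = e q.2 then 0 else Nat.find (Function.ne_iff.mp h) + 1 with hg2
  set N := (I ×ˢ I).sup g2 with hN
  have hsep : ∀ a ∈ I, ∀ b ∈ I,
      (fun i : Fin N => e a i) = (fun i : Fin N => e b i) → a = b := by
    intro a ha b hb hab
    by_contra hne
    have hee : e a ≠ e b := fun h => hne (he h)
    have hle : g2 (a, b) ≤ N := Finset.le_sup (Finset.mem_product.mpr ⟨ha, hb⟩)
    rw [hg2] at hle
    simp only [dif_neg hee] at hle
    have hlt : Nat.find (Function.ne_iff.mp hee) < N := by omega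
    have := congrFun hab ⟨_, hlt⟩
    simp only at this
    exact Nat.find_spec (Function.ne_iff.mp hee) this
  have hval : ∀ a : ι, ∃ (m : ℕ) (y : X), a ∈ I → (y ∈ D m ∧ y ∈ u a) := by
    intro a
    by_cases ha : a ∈ I
    · have hne : (u a).Nonempty := ⟨x a, (hu a ha).2⟩
      obtain ⟨y, hyu, hyD⟩ := dense_iff_inter_open.mp hdense (u a) (hu a ha).1 hne
      obtain ⟨m, hm⟩ := mem_iUnion.mp hyD
      exact ⟨m, y, fun _ => ⟨hm, hyu⟩⟩
    · exact ⟨n₀, d₀, fun h => absurd h ha⟩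
  choose m dd hmd using hval
  set c : (Fin N → Bool) → ℕ := fun r =>
    if h : ∃ a, a ∈ I ∧ (fun i : Fin N => e a i) = r then m h.choose else n₀ with hc
  set v : (Fin N → Bool) → X := fun r =>
    if h : ∃ a, a ∈ I ∧ (fun i : Fin N => e a i) = r then dd h.choose else d₀ with hvdef
  have hv : ∀ r, v r ∈ D (c r) := by
    intro r
    by_cases h : ∃ a, a ∈ I ∧ (fun i : Fin N => e a i) = r
    · simp only [hvdef, hc, dif_pos h]
      exact (hmd h.choose h.choose_spec.1).1
    · simp only [hvdef, hc, dif_neg h]; exact hd₀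
  set f : ι → X := fun a => v (fun i : Fin N => e a i) with hfdef
  have hfS : f ∈ patSet e D N c := by
    refine ⟨fun a b hab => ?_, fun a => hv _⟩
    simp only [hfdef]
    rw [hab]
  have hfI : ∀ a ∈ I, f a ∈ u a := by
    intro a ha
    have h : ∃ a', a' ∈ I ∧ (fun i : Fin N => e a' i) = (fun i : Fin N => e a i) :=
      ⟨a, ha, rfl⟩
    have heq : h.choose = a := hsep _ h.choose_spec.1 _ ha h.choose_spec.2
    simp only [hfdef, hvdef, dif_pos h]
    rw [heq]
    exact (hmd a ha).2
  exact ⟨f, hOsub (fun a ha => hfI a ha), mem_iUnion.mpr ⟨⟨N, c⟩, hfS⟩⟩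

/-- If `X` is `e`-separable and `κ ≤ 𝔠` then `X^κ` is `e`-separable. -/
theorem eSeparable_pow_le_continuum {X : Type u} [TopologicalSpace X] [T1Space X]
    (hX : ESeparable X) (κ : Cardinal.{u}) (hκ : κ ≤ 2 ^ ℵ₀) :
    ESeparable (κ.out → X) := by
  classical
  by_cases hsub : Subsingleton (κ.out → X)
  · refine ⟨fun _ => Set.univ, fun n => ⟨isClosed_univ, ?_⟩,
      by rw [iUnion_const]; exact dense_univ⟩
    rw [discreteTopology_iff_isOpen_singleton]
    intro a
    haveI := hsub
    have : ({a} : Set ((Set.univ : Set (κ.out → X)))) = Set.univ := by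
      ext b; simp [Subsingleton.elim b a]
    rw [this]; exact isOpen_univ
  · have hXne : Nonempty X := by
      by_contra hXe
      haveI : IsEmpty X := not_nonempty_iff.mp hXe
      exact hsub inferInstance
    obtain ⟨D, hD, hdense⟩ := hX
    obtain ⟨d₀, hd₀⟩ := hdense.nonempty
    obtain ⟨n₀, hn₀⟩ := mem_iUnion.mp hd₀
    -- embed κ.out into 2^ℕ
    have hcard : #(κ.out) ≤ #(ULift.{u} (ℕ → Bool)) := by
      rw [mk_out, mk_uLift]
      have h1 : #(ℕ → Bool) = 2 ^ (ℵ₀ : Cardinal) := by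
        rw [← Cardinal.power_def, mk_bool, mk_nat]
      rw [h1, Cardinal.lift_two_power, Cardinal.lift_aleph0]
      exact hκ
    obtain ⟨emb⟩ := Cardinal.le_def _ _ |>.mp hcard
    set e : κ.out → (ℕ → Bool) := fun a => (emb a).down with he
    have hinj : Function.Injective e :=
      fun a b h => emb.injective (ULift.down_injective h)
    haveI : Nonempty ((N : ℕ) × ((Fin N → Bool) → ℕ)) := ⟨⟨0, fun _ => 0⟩⟩
    obtain ⟨g, hgsurj⟩ := exists_surjective_nat ((N : ℕ) × ((Fin N → Bool) → ℕ))
    refine ⟨fun k => patSet e D (g k).1 (g k).2,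
      fun k => ⟨patSet_isClosed e D hD _ _, patSet_discrete e D hD _ _⟩, ?_⟩
    have hun : (⋃ k, patSet e D (g k).1 (g k).2)
        = ⋃ p : (N : ℕ) × ((Fin N → Bool) → ℕ), patSet e D p.1 p.2 :=
      hgsurj.iUnion_comp (fun p => patSet e D p.1 p.2)
    rw [hun]
    exact patSet_dense hinj D hdense n₀ d₀ hn₀
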